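/- Let μ > 0, M ∈ ℝ, and set β₀ = 2μ(1 − e^{−M/(2μ)}). Let β₁ ∈ ℝ and τ ∈ ℝ be such that D(ξ,τ) = 1 − (β₀/(2μ)) ∫_{−∞}^ξ φ₀(y) dy − (β₁/(2μ)) e^{−τ/2} φ₀(ξ) > 0 for all ξ ∈ ℝ. Then the diffusive N-wave w_N(·,τ) = (β₀ φ₀ + β₁ e^{−τ/2} φ₁)/D(·,τ) is integrable on ℝ and ∫_ℝ w_N(ξ,τ) dξ = M; in particular the mass is independent of τ and of β₁. -/

import Mathlib

open MeasureTheory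

/-- The Gaussian `φ₀(ξ) = (4πμ)^{−1/2} e^{−ξ²/(4μ)}`. -/
noncomputable def phi0 (μ ξ : ℝ) : ℝ :=
  (Real.sqrt (4 * Real.pi * μ))⁻¹ * Real.exp (-ξ ^ 2 / (4 * μ))

/-- The denominator of the diffusive N-wave:
`D(ξ,τ) = 1 − (β₀/(2μ)) ∫_{−∞}^ξ φ₀ − (β₁/(2μ)) e^{−τ/2} φ₀(ξ)`. -/
noncomputable def Dden (μ β₀ β₁ ξ τ : ℝ) : ℝ :=
  1 - β₀ / (2 * μ) * (∫ y in Set.Iio ξ, phi0 μ y) - β₁ / (2 * μ) * Real.exp (-τ / 2) * phi0 μ ξ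

/-- The diffusive N-wave `w_N(ξ,τ) = (β₀ φ₀(ξ) + β₁ e^{−τ/2} φ₁(ξ)) / D(ξ,τ)`, `φ₁ = φ₀'`. -/
noncomputable def wN (μ β₀ β₁ ξ τ : ℝ) : ℝ :=
  (β₀ * phi0 μ ξ + β₁ * Real.exp (-τ / 2) * deriv (phi0 μ) ξ) / Dden μ β₀ β₁ ξ τ

open Filter Set

lemma phi0_eq (μ : ℝ) : phi0 μ = fun ξ =>
    (Real.sqrt (4 * Real.pi * μ))⁻¹ * Real.exp (-(4 * μ)⁻¹ * ξ ^ 2) := by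
  funext ξ; unfold phi0; ring_nf

lemma phi0_cont (μ : ℝ) : Continuous (phi0 μ) := by
  rw [phi0_eq]
  exact continuous_const.mul ((continuous_const.mul (continuous_pow 2)).rexp)

lemma phi0_integrable {μ : ℝ} (hμ : 0 < μ) : Integrable (phi0 μ) := by
  rw [phi0_eq]
  exact (integrable_exp_neg_mul_sq (by positivity : (0:ℝ) < (4*μ)⁻¹)).const_mul _

lemma phi0_integral {μ : ℝ} (hμ : 0 < μ) : (∫ ξ : ℝ, phi0 μ ξ) = 1 := by
  rw [phi0_eq]
  rw [integral_const_mul, integral_gaussian]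
  have h1 : Real.pi / (4*μ)⁻¹ = 4 * Real.pi * μ := by field_simp
  rw [h1, inv_mul_cancel₀]
  positivity

lemma phi0_hasDeriv {μ : ℝ} (hμ : 0 < μ) (ξ : ℝ) :
    HasDerivAt (phi0 μ) (-(ξ / (2*μ)) * phi0 μ ξ) ξ := by
  have h1 : HasDerivAt (fun ξ : ℝ => -(4*μ)⁻¹ * ξ ^ 2) (-(4*μ)⁻¹ * (2*ξ)) ξ := by
    simpa using ((hasDerivAt_pow 2 ξ).const_mul (-(4*μ)⁻¹))
  have h2 := ((Real.hasDerivAt_exp _).comp ξ h1).const_mul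
    ((Real.sqrt (4 * Real.pi * μ))⁻¹)
  rw [phi0_eq]
  convert h2 using 1
  have hμ' : μ ≠ 0 := ne_of_gt hμ
  rotate_left 3
  field_simp
  ring
  all_goals rfl

lemma phi0_deriv {μ : ℝ} (hμ : 0 < μ) :
    deriv (phi0 μ) = fun ξ => -(ξ / (2*μ)) * phi0 μ ξ := by
  funext ξ; exact (phi0_hasDeriv hμ ξ).deriv

lemma phi0_deriv_cont {μ : ℝ} (hμ : 0 < μ) : Continuous (deriv (phi0 μ)) := by
  rw [phi0_deriv hμ]
  exact ((continuous_id.div_const _).neg).mul (phi0_cont μ)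

lemma phi0_deriv_integrable {μ : ℝ} (hμ : 0 < μ) : Integrable (deriv (phi0 μ)) := by
  rw [phi0_deriv hμ]
  have : (fun ξ => -(ξ / (2*μ)) * phi0 μ ξ)
      = fun ξ => (-(2*μ)⁻¹ * (Real.sqrt (4 * Real.pi * μ))⁻¹) *
        (ξ * Real.exp (-(4*μ)⁻¹ * ξ ^ 2)) := by
    funext ξ; rw [phi0_eq]; ring
  rw [this]
  exact (integrable_mul_exp_neg_mul_sq (by positivity : (0:ℝ) < (4*μ)⁻¹)).const_mul _

lemma phi0_tendsto_top {μ : ℝ} (hμ : 0 < μ) : Tendsto (phi0 μ) atTop (nhds 0) := by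
  rw [phi0_eq]
  have h1 : Tendsto (fun ξ : ℝ => -(4*μ)⁻¹ * ξ ^ 2) atTop atBot :=
    (tendsto_pow_atTop two_ne_zero).const_mul_atTop_of_neg (neg_lt_zero.mpr (by positivity))
  simpa using (Real.tendsto_exp_atBot.comp h1).const_mul ((Real.sqrt (4 * Real.pi * μ))⁻¹)

lemma phi0_tendsto_bot {μ : ℝ} (hμ : 0 < μ) : Tendsto (phi0 μ) atBot (nhds 0) := by
  rw [phi0_eq]
  have hsq : Tendsto (fun ξ : ℝ => ξ ^ 2) atBot atTop := by
    have := (tendsto_pow_atTop (two_ne_zero)).comp (tendsto_neg_atBot_atTop : Tendsto (Neg.neg : ℝ → ℝ) atBot atTop)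
    have he : ((fun x : ℝ => x ^ 2) ∘ Neg.neg) = fun ξ : ℝ => ξ ^ 2 := by
      funext x; simp [Function.comp, neg_sq]
    rwa [he] at this
  have h1 : Tendsto (fun ξ : ℝ => -(4*μ)⁻¹ * ξ ^ 2) atBot atBot :=
    hsq.const_mul_atTop_of_neg (neg_lt_zero.mpr (by positivity))
  simpa using (Real.tendsto_exp_atBot.comp h1).const_mul ((Real.sqrt (4 * Real.pi * μ))⁻¹)

lemma Phi_tendsto_top {μ : ℝ} (hμ : 0 < μ) :
    Tendsto (fun ξ => ∫ y in Iio ξ, phi0 μ y) atTop (nhds 1) := by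
  have h := tendsto_setIntegral_of_monotone (μ := volume) (f := phi0 μ)
    (s := fun r : ℝ => Iio r) (fun i => measurableSet_Iio)
    (fun i j hij => Iio_subset_Iio hij)
    ((phi0_integrable hμ).integrableOn)
  rw [iUnion_Iio, setIntegral_univ, phi0_integral hμ] at h
  exact h

lemma Phi_tendsto_bot {μ : ℝ} (hμ : 0 < μ) :
    Tendsto (fun ξ => ∫ y in Iio ξ, phi0 μ y) atBot (nhds 0) := by
  have h := tendsto_setIntegral_of_antitone (μ := volume) (f := phi0 μ)
    (s := fun r : ℝ => Iio (-r)) (fun i => measurableSet_Iio)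
    (fun i j hij => Iio_subset_Iio (by linarith))
    ⟨0, (phi0_integrable hμ).integrableOn⟩
  have he : (⋂ r : ℝ, Iio (-r)) = (∅ : Set ℝ) := by
    ext x
    simp only [mem_iInter, mem_Iio, mem_empty_iff_false, iff_false, not_forall, not_lt]
    exact ⟨-x, by linarith⟩
  rw [he] at h
  simp only [Measure.restrict_empty, integral_zero_measure] at h
  have h2 := h.comp (tendsto_neg_atBot_atTop : Tendsto (Neg.neg : ℝ → ℝ) atBot atTop)
  have he2 : ((fun i => ∫ (x : ℝ) in Iio (-i), phi0 μ x) ∘ Neg.neg)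
      = fun ξ => ∫ y in Iio ξ, phi0 μ y := by
    funext x; simp [Function.comp]
  rwa [he2] at h2

lemma Phi_hasDeriv {μ : ℝ} (hμ : 0 < μ) (ξ : ℝ) :
    HasDerivAt (fun ξ => ∫ y in Iio ξ, phi0 μ y) (phi0 μ ξ) ξ := by
  have key : (fun ξ => ∫ y in Iio ξ, phi0 μ y)
      = fun ξ => (∫ y in Iic (0:ℝ), phi0 μ y) + ∫ y in (0:ℝ)..ξ, phi0 μ y := by
    funext ξ
    rw [← integral_Iic_eq_integral_Iio,
      ← intervalIntegral.integral_Iic_sub_Iic ((phi0_integrable hμ).integrableOn)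
        ((phi0_integrable hμ).integrableOn)]
    ring
  rw [key]
  exact (intervalIntegral.integral_hasDerivAt_right
    ((phi0_integrable hμ).intervalIntegrable)
    ((phi0_cont μ).stronglyMeasurableAtFilter _ _)
    (phi0_cont μ).continuousAt).const_add _

lemma Dden_hasDeriv {μ : ℝ} (β₀ β₁ τ : ℝ) (hμ : 0 < μ) (ξ : ℝ) :
    HasDerivAt (fun ξ => Dden μ β₀ β₁ ξ τ)
      (-(β₀ / (2 * μ) * phi0 μ ξ) - β₁ / (2 * μ) * Real.exp (-τ / 2) * deriv (phi0 μ) ξ) ξ := by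
  unfold Dden
  have h1 := ((Phi_hasDeriv hμ ξ).const_mul (β₀ / (2 * μ))).const_sub 1
  have h2 := (phi0_hasDeriv hμ ξ).const_mul (β₁ / (2 * μ) * Real.exp (-τ / 2))
  have h3 := h1.sub h2
  convert h3 using 1
  rotate_left 3
  rw [phi0_deriv hμ]
  all_goals rfl

lemma Dden_cont {μ : ℝ} (β₀ β₁ τ : ℝ) (hμ : 0 < μ) :
    Continuous (fun ξ => Dden μ β₀ β₁ ξ τ) :=
  continuous_iff_continuousAt.2 fun ξ => (Dden_hasDeriv β₀ β₁ τ hμ ξ).continuousAt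

lemma Dden_tendsto_top {μ : ℝ} (β₀ β₁ τ : ℝ) (hμ : 0 < μ) :
    Tendsto (fun ξ => Dden μ β₀ β₁ ξ τ) atTop (nhds (1 - β₀ / (2 * μ))) := by
  unfold Dden
  have := ((tendsto_const_nhds : Tendsto (fun _ : ℝ => (1:ℝ)) atTop (nhds 1)).sub
    ((Phi_tendsto_top hμ).const_mul (β₀ / (2 * μ)))).sub
    ((phi0_tendsto_top hμ).const_mul (β₁ / (2 * μ) * Real.exp (-τ / 2)))
  simpa using this

lemma Dden_tendsto_bot {μ : ℝ} (β₀ β₁ τ : ℝ) (hμ : 0 < μ) :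
    Tendsto (fun ξ => Dden μ β₀ β₁ ξ τ) atBot (nhds 1) := by
  unfold Dden
  have := ((tendsto_const_nhds : Tendsto (fun _ : ℝ => (1:ℝ)) atBot (nhds 1)).sub
    ((Phi_tendsto_bot hμ).const_mul (β₀ / (2 * μ)))).sub
    ((phi0_tendsto_bot hμ).const_mul (β₁ / (2 * μ) * Real.exp (-τ / 2)))
  simpa using this

/-- with `β₀ = 2μ(1 − e^{−M/(2μ)})`, and for any `β₁, τ` such that the
denominator is strictly positive on `ℝ`, the diffusive N-wave `w_N(·,τ)` is integrable
and has total mass `M` (independent of `τ` and `β₁`). -/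
theorem stmt10 (μ M β₀ β₁ τ : ℝ) (hμ : 0 < μ)
    (hβ₀ : β₀ = 2 * μ * (1 - Real.exp (-M / (2 * μ))))
    (hpos : ∀ ξ : ℝ, 0 < Dden μ β₀ β₁ ξ τ) :
    Integrable (fun ξ => wN μ β₀ β₁ ξ τ) ∧ (∫ ξ : ℝ, wN μ β₀ β₁ ξ τ) = M := by
  have hμ' : μ ≠ 0 := ne_of_gt hμ
  set E := Real.exp (-M / (2 * μ)) with hE
  have hEpos : 0 < E := Real.exp_pos _
  have hlim : 1 - β₀ / (2 * μ) = E := by rw [hβ₀]; field_simp; ring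
  -- limits of Dden
  have hDtop : Tendsto (fun ξ => Dden μ β₀ β₁ ξ τ) atTop (nhds E) := by
    rw [← hlim]; exact Dden_tendsto_top β₀ β₁ τ hμ
  have hDbot := Dden_tendsto_bot β₀ β₁ τ hμ
  -- derivative of -2μ log D
  have hg : ∀ ξ : ℝ, HasDerivAt (fun ξ => -(2 * μ) * Real.log (Dden μ β₀ β₁ ξ τ))
      (wN μ β₀ β₁ ξ τ) ξ := by
    intro ξ
    have hD := Dden_hasDeriv β₀ β₁ τ hμ ξ
    have hlog := (Real.hasDerivAt_log (ne_of_gt (hpos ξ))).comp ξ hD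
    have h := hlog.const_mul (-(2 * μ))
    convert h using 1
    rotate_left 3
    unfold wN
    have hDne : Dden μ β₀ β₁ ξ τ ≠ 0 := ne_of_gt (hpos ξ)
    field_simp
    ring
    all_goals rfl
  -- uniform lower bound on Dden
  have hlb : ∃ ε > 0, ∀ ξ : ℝ, ε ≤ Dden μ β₀ β₁ ξ τ := by
    set L := min 1 E / 2 with hL
    have hLpos : 0 < L := by positivity
    have hLE : L < E := by
      have : min 1 E ≤ E := min_le_right _ _
      nlinarith
    have hL1 : L < 1 := by
      have : min 1 E ≤ 1 := min_le_left _ _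
      nlinarith
    obtain ⟨a, ha⟩ := (hDtop.eventually (eventually_gt_nhds hLE)).exists_forall_of_atTop
    obtain ⟨b, hb⟩ := (hDbot.eventually (eventually_gt_nhds hL1)).exists_forall_of_atBot
    rcases le_or_gt b a with hba | hab
    · obtain ⟨x₀, hx₀K, hx₀min⟩ := isCompact_Icc.exists_isMinOn (Set.nonempty_Icc.2 hba)
        ((Dden_cont β₀ β₁ τ hμ).continuousOn (s := Icc b a))
      refine ⟨min L (Dden μ β₀ β₁ x₀ τ), lt_min hLpos (hpos x₀), fun ξ => ?_⟩
      rcases le_total ξ b with hξ | hξ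
      · exact le_trans (min_le_left _ _) (le_of_lt (hb ξ hξ))
      · rcases le_total ξ a with hξ' | hξ'
        · exact le_trans (min_le_right _ _) (hx₀min ⟨hξ, hξ'⟩)
        · exact le_trans (min_le_left _ _) (le_of_lt (ha ξ hξ'))
    · refine ⟨L, hLpos, fun ξ => ?_⟩
      rcases le_total ξ b with hξ | hξ
      · exact le_of_lt (hb ξ hξ)
      · exact le_of_lt (ha ξ (by linarith))
  obtain ⟨ε, hεpos, hεle⟩ := hlb
  -- integrability
  have hnum_int : Integrable (fun ξ => β₀ * phi0 μ ξ + β₁ * Real.exp (-τ / 2) * deriv (phi0 μ) ξ) :=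
    ((phi0_integrable hμ).const_mul β₀).add ((phi0_deriv_integrable hμ).const_mul _)
  have hnum_cont : Continuous (fun ξ => β₀ * phi0 μ ξ + β₁ * Real.exp (-τ / 2) * deriv (phi0 μ) ξ) :=
    (continuous_const.mul (phi0_cont μ)).add (continuous_const.mul (phi0_deriv_cont hμ))
  have hwN_cont : Continuous (fun ξ => wN μ β₀ β₁ ξ τ) := by
    unfold wN
    exact hnum_cont.div (Dden_cont β₀ β₁ τ hμ) (fun ξ => ne_of_gt (hpos ξ))
  have hint : Integrable (fun ξ => wN μ β₀ β₁ ξ τ) := by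
    refine Integrable.mono' ((hnum_int.norm).const_mul ε⁻¹) hwN_cont.aestronglyMeasurable
      (Filter.Eventually.of_forall fun ξ => ?_)
    unfold wN
    calc ‖(β₀ * phi0 μ ξ + β₁ * Real.exp (-τ / 2) * deriv (phi0 μ) ξ) / Dden μ β₀ β₁ ξ τ‖
        = ‖β₀ * phi0 μ ξ + β₁ * Real.exp (-τ / 2) * deriv (phi0 μ) ξ‖ / Dden μ β₀ β₁ ξ τ := by
          rw [norm_div, Real.norm_eq_abs (Dden μ β₀ β₁ ξ τ), abs_of_pos (hpos ξ)]
      _ ≤ ‖β₀ * phi0 μ ξ + β₁ * Real.exp (-τ / 2) * deriv (phi0 μ) ξ‖ / ε :=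
          div_le_div_of_nonneg_left (norm_nonneg _) hεpos (hεle ξ)
      _ = ε⁻¹ * ‖β₀ * phi0 μ ξ + β₁ * Real.exp (-τ / 2) * deriv (phi0 μ) ξ‖ := div_eq_inv_mul _ _
  refine ⟨hint, ?_⟩
  -- limits of -2μ log D
  have htop : Tendsto (fun ξ => -(2 * μ) * Real.log (Dden μ β₀ β₁ ξ τ)) atTop (nhds M) := by
    have := (((Real.continuousAt_log (ne_of_gt hEpos)).tendsto.comp hDtop).const_mul (-(2 * μ)))
    have hval : -(2 * μ) * Real.log E = M := by
      rw [hE, Real.log_exp]; field_simp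
    rwa [hval] at this
  have hbot : Tendsto (fun ξ => -(2 * μ) * Real.log (Dden μ β₀ β₁ ξ τ)) atBot (nhds 0) := by
    have := (((Real.continuousAt_log one_ne_zero).tendsto.comp hDbot).const_mul (-(2 * μ)))
    simpa using this
  rw [integral_of_hasDerivAt_of_tendsto hg hint hbot htop, sub_zero]
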